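/- Let F be an algebraically closed field, α₁, β₁, β₈ ∈ F with α₁ ≠ 0 and β₈ ≠ 0, and let e₁ = (1,0,0) ∈ F^3. Then for all integers k₁, k₂ ≥ 2 and every A ∈ O(F), there exist X, Y ∈ O(F) with A = (α₁, 0; 0, 0)·X^{k₁} + (0, e₁; 0, β₈)·Y^{k₂}. -/

import Mathlib

/-- Zorn vector matrices: the split octonion algebra over `F`. -/
structure Oct (F : Type*) where
  a : F              -- upper-left scalar η
  b : Fin 3 → F      -- upper-right vector x
  c : Fin 3 → F      -- lower-left vector y
  d : F              -- lower-right scalar ζ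

namespace Oct

variable {F : Type*} [Field F]

/-- standard bilinear form on F^3 -/
def dot (x y : Fin 3 → F) : F := x 0 * y 0 + x 1 * y 1 + x 2 * y 2

/-- cross product on F^3, satisfying ⟨x ∧ y, z⟩ = det(x,y,z) -/
def cross (x y : Fin 3 → F) : Fin 3 → F :=
  ![x 1 * y 2 - x 2 * y 1, x 2 * y 0 - x 0 * y 2, x 0 * y 1 - x 1 * y 0]

instance : Add (Oct F) :=
  ⟨fun A B => ⟨A.a + B.a, A.b + B.b, A.c + B.c, A.d + B.d⟩⟩

instance : Mul (Oct F) :=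
  ⟨fun A B =>
    ⟨A.a * B.a + dot A.b B.c,
     A.a • B.b + B.d • A.b + cross A.c B.c,
     A.d • B.c + B.a • A.c + cross A.b B.b,
     A.d * B.d + dot A.c B.b⟩⟩

instance : SMul F (Oct F) :=
  ⟨fun t A => ⟨t * A.a, t • A.b, t • A.c, t * A.d⟩⟩

instance : One (Oct F) := ⟨⟨1, 0, 0, 1⟩⟩

/-- powers, via A^{n+1} = A · A^n (well-defined by power-associativity) -/
def pow (A : Oct F) : ℕ → Oct F
  | 0 => 1
  | n + 1 => A * pow A n

/-- octonion conjugation -/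
def conj (A : Oct F) : Oct F := ⟨A.d, -A.b, -A.c, A.a⟩

/-- the norm form -/
def norm (A : Oct F) : F := A.a * A.d - dot A.b A.c

end Oct

namespace Oct
variable {F : Type*} [Field F]

lemma mk_mul_mk (a₁ d₁ a₂ d₂ : F) (b₁ c₁ b₂ c₂ : Fin 3 → F) :
    (⟨a₁,b₁,c₁,d₁⟩ * ⟨a₂,b₂,c₂,d₂⟩ : Oct F) =
      ⟨a₁*a₂ + dot b₁ c₂, a₁ • b₂ + d₂ • b₁ + cross c₁ c₂,
       d₁ • c₂ + a₂ • c₁ + cross b₁ b₂, d₁*d₂ + dot c₁ b₂⟩ := rfl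

lemma mk_add_mk (a₁ d₁ a₂ d₂ : F) (b₁ c₁ b₂ c₂ : Fin 3 → F) :
    (⟨a₁,b₁,c₁,d₁⟩ + ⟨a₂,b₂,c₂,d₂⟩ : Oct F) =
      ⟨a₁+a₂, b₁+b₂, c₁+c₂, d₁+d₂⟩ := rfl

lemma one_def : (1 : Oct F) = ⟨1, 0, 0, 1⟩ := rfl

lemma dot_zero_right (x : Fin 3 → F) : dot x 0 = 0 := by simp [dot]
lemma dot_zero_left (x : Fin 3 → F) : dot (0:Fin 3 → F) x = 0 := by simp [dot]
lemma cross_zero_right (x : Fin 3 → F) : cross x 0 = 0 := by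
  funext i; fin_cases i <;> simp [cross]
lemma cross_zero_left (x : Fin 3 → F) : cross 0 x = 0 := by
  funext i; fin_cases i <;> simp [cross]
lemma cross_self (x : Fin 3 → F) : cross x x = 0 := by
  funext i; fin_cases i <;> simp [cross, mul_comm]
lemma cross_smul_self (t : F) (x : Fin 3 → F) : cross x (t • x) = 0 := by
  funext i; fin_cases i <;> simp [cross] <;> ring

lemma pow_upper (a : F) (b : Fin 3 → F) :
    ∀ k : ℕ, pow (⟨a, b, 0, 0⟩ : Oct F) (k+1) = ⟨a^(k+1), a^k • b, 0, 0⟩ := by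
  intro k
  induction k with
  | zero =>
      show (⟨a, b, 0, 0⟩ : Oct F) * 1 = _
      rw [one_def, mk_mul_mk]
      simp [dot_zero_right, dot_zero_left, cross_zero_right, cross_zero_left]
  | succ n ih =>
      show (⟨a, b, 0, 0⟩ : Oct F) * pow _ (n+1) = _
      rw [ih, mk_mul_mk]
      simp [dot_zero_right, dot_zero_left, cross_zero_right, cross_zero_left,
        cross_self, cross_smul_self, smul_smul]
      constructor
      · ring
      · rw [pow_succ']

lemma pow_idem_b (b : Fin 3 → F) :
    ∀ k : ℕ, pow (⟨0, b, 0, 1⟩ : Oct F) (k+1) = ⟨0, b, 0, 1⟩ := by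
  intro k
  induction k with
  | zero =>
      show (⟨0, b, 0, 1⟩ : Oct F) * 1 = _
      rw [one_def, mk_mul_mk]
      simp [dot_zero_right, dot_zero_left, cross_zero_right, cross_zero_left]
  | succ n ih =>
      show (⟨0, b, 0, 1⟩ : Oct F) * pow _ (n+1) = _
      rw [ih, mk_mul_mk]
      simp [dot_zero_right, dot_zero_left, cross_zero_right, cross_zero_left,
        cross_self]

lemma pow_lower (d : F) (c : Fin 3 → F) :
    ∀ k : ℕ, pow (⟨0, 0, c, d⟩ : Oct F) (k+1) = ⟨0, 0, d^k • c, d^(k+1)⟩ := by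
  intro k
  induction k with
  | zero =>
      show (⟨0, 0, c, d⟩ : Oct F) * 1 = _
      rw [one_def, mk_mul_mk]
      simp [dot_zero_right, dot_zero_left, cross_zero_right, cross_zero_left]
  | succ n ih =>
      show (⟨0, 0, c, d⟩ : Oct F) * pow _ (n+1) = _
      rw [ih, mk_mul_mk]
      simp [dot_zero_right, dot_zero_left, cross_zero_right, cross_zero_left,
        cross_self, cross_smul_self, smul_smul]
      constructor
      · rw [pow_succ']
      · ring

lemma pow_idem_c (c : Fin 3 → F) :
    ∀ k : ℕ, pow (⟨1, 0, c, 0⟩ : Oct F) (k+1) = ⟨1, 0, c, 0⟩ := by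
  intro k
  induction k with
  | zero =>
      show (⟨1, 0, c, 0⟩ : Oct F) * 1 = _
      rw [one_def, mk_mul_mk]
      simp [dot_zero_right, dot_zero_left, cross_zero_right, cross_zero_left]
  | succ n ih =>
      show (⟨1, 0, c, 0⟩ : Oct F) * pow _ (n+1) = _
      rw [ih, mk_mul_mk]
      simp [dot_zero_right, dot_zero_left, cross_zero_right, cross_zero_left,
        cross_self]

lemma dot_e₁ (v : Fin 3 → F) : dot ![1,0,0] v = v 0 := by simp [dot]

lemma cross_e₁_zero : cross (![1,0,0] : Fin 3 → F) 0 = 0 := cross_zero_right _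

lemma exists_X [IsAlgClosed F] (α₁ : F) (hα₁ : α₁ ≠ 0) (k : ℕ) (hk : 1 ≤ k)
    (ta : F) (tb : Fin 3 → F) :
    ∃ X : Oct F, (⟨α₁, 0, 0, 0⟩ : Oct F) * pow X k = ⟨ta, tb, 0, 0⟩ := by
  obtain ⟨m, rfl⟩ : ∃ m, k = m + 1 := ⟨k - 1, by omega⟩
  by_cases hta : ta = 0
  · refine ⟨⟨0, α₁⁻¹ • tb, 0, 1⟩, ?_⟩
    rw [pow_idem_b, mk_mul_mk]
    simp [dot_zero_right, dot_zero_left, cross_zero_right, cross_zero_left,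
      smul_smul, hta, mul_inv_cancel₀ hα₁]
  · obtain ⟨x, hx⟩ := IsAlgClosed.exists_pow_nat_eq (ta * α₁⁻¹) (n := m+1) (by omega)
    have hx0 : x ≠ 0 := by
      intro h; rw [h, zero_pow (by omega)] at hx
      exact hta (by field_simp at hx; simpa using hx.symm)
    refine ⟨⟨x, (α₁ * x^m)⁻¹ • tb, 0, 0⟩, ?_⟩
    rw [pow_upper, mk_mul_mk, Oct.mk.injEq]
    refine ⟨?_, ?_, ?_, ?_⟩
    · rw [dot_zero_right, add_zero, hx]; field_simp
    · rw [cross_zero_left, add_zero, smul_zero, add_zero, smul_smul, smul_smul,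
        mul_inv_cancel₀ (mul_ne_zero hα₁ (pow_ne_zero _ hx0)), one_smul]
    · simp [cross_zero_left]
    · rw [dot_zero_left, mul_zero, add_zero]

lemma exists_Y [IsAlgClosed F] (β₈ : F) (hβ₈ : β₈ ≠ 0) (k : ℕ) (hk : 1 ≤ k)
    (tc : Fin 3 → F) (td : F) :
    ∃ Y : Oct F, (⟨0, ![1,0,0], 0, β₈⟩ : Oct F) * pow Y k
      = ⟨β₈⁻¹ * tc 0, (β₈⁻¹ * td) • ![1,0,0], tc, td⟩ := by
  obtain ⟨m, rfl⟩ : ∃ m, k = m + 1 := ⟨k - 1, by omega⟩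
  by_cases htd : td = 0
  · refine ⟨⟨1, 0, β₈⁻¹ • tc, 0⟩, ?_⟩
    rw [pow_idem_c, mk_mul_mk, Oct.mk.injEq]
    refine ⟨?_, ?_, ?_, ?_⟩
    · rw [dot_e₁, zero_mul, zero_add, Pi.smul_apply, smul_eq_mul]
    · rw [cross_zero_left, smul_zero, zero_smul, add_zero, add_zero, htd,
        mul_zero, zero_smul]
    · rw [cross_zero_right, add_zero, one_smul, add_zero, smul_smul,
        mul_inv_cancel₀ hβ₈, one_smul]
    · rw [dot_zero_left, mul_zero, add_zero, htd]
  · obtain ⟨x, hx⟩ := IsAlgClosed.exists_pow_nat_eq (td * β₈⁻¹) (n := m+1) (by omega)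
    have hx0 : x ≠ 0 := by
      intro h; rw [h, zero_pow (by omega)] at hx
      exact htd (by field_simp at hx; simpa using hx.symm)
    refine ⟨⟨0, 0, (β₈ * x^m)⁻¹ • tc, x⟩, ?_⟩
    rw [pow_lower, mk_mul_mk, Oct.mk.injEq]
    have h2 : x ^ m * (β₈ * x ^ m)⁻¹ = β₈⁻¹ := by field_simp
    refine ⟨?_, ?_, ?_, ?_⟩
    · rw [dot_e₁, zero_mul, zero_add, Pi.smul_apply, Pi.smul_apply, smul_eq_mul,
        smul_eq_mul, ← mul_assoc, h2]
    · rw [cross_zero_left, add_zero, smul_zero, zero_add, hx]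
      rw [show td * β₈⁻¹ = β₈⁻¹ * td from mul_comm _ _]
    · rw [cross_zero_right, add_zero, zero_smul, add_zero, smul_smul, smul_smul,
        mul_inv_cancel₀ (mul_ne_zero hβ₈ (pow_ne_zero _ hx0)), one_smul]
    · rw [dot_zero_left, add_zero, hx]; field_simp

end Oct

open Oct
theorem stmt_8 {F : Type*} [Field F] [IsAlgClosed F] (α₁ β₁ β₈ : F)
    (hα₁ : α₁ ≠ 0) (hβ₈ : β₈ ≠ 0) (k₁ k₂ : ℕ) (hk₁ : 2 ≤ k₁) (hk₂ : 2 ≤ k₂)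
    (A : Oct F) :
    ∃ X Y : Oct F,
      A = (⟨α₁, 0, 0, 0⟩ : Oct F) * pow X k₁
        + (⟨0, ![1, 0, 0], 0, β₈⟩ : Oct F) * pow Y k₂ := by
  obtain ⟨X, hX⟩ := exists_X α₁ hα₁ k₁ (by omega) (A.a - β₈⁻¹ * A.c 0)
    (A.b - (β₈⁻¹ * A.d) • ![1,0,0])
  obtain ⟨Y, hY⟩ := exists_Y β₈ hβ₈ k₂ (by omega) A.c A.d
  refine ⟨X, Y, ?_⟩
  rw [hX, hY, mk_add_mk]
  obtain ⟨Aa, Ab, Ac, Ad⟩ := A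
  rw [Oct.mk.injEq]
  exact ⟨by ring, by abel, (zero_add _).symm, by ring⟩
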